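/- Let Σ be an n×n real positive semidefinite matrix, μ ∈ Im(Σ), and W, Φ n×m real matrices satisfying Σ W Φᵀ = Φ Wᵀ Σ W Φᵀ = Φ Wᵀ Σ. If μ = Φ Wᵀ μ, then μ ∈ Im(ΣW). Conversely, if additionally Wᵀ Φ Wᵀ = Wᵀ, then μ ∈ Im(ΣW) implies μ = Φ Wᵀ μ. -/
import Mathlib


open Matrix

theorem stmt15 {n m : ℕ} (Sx : Matrix (Fin n) (Fin n) ℝ) (hSx : Sx.PosSemidef)
    (μ : Fin n → ℝ) (hμ : μ ∈ LinearMap.range (Matrix.toLin' Sx))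
    (W Φ : Matrix (Fin n) (Fin m) ℝ)
    (h1 : Sx * W * Φᵀ = Φ * Wᵀ * Sx * W * Φᵀ)
    (h2 : Φ * Wᵀ * Sx * W * Φᵀ = Φ * Wᵀ * Sx) :
    (μ = (Φ * Wᵀ).mulVec μ → μ ∈ LinearMap.range (Matrix.toLin' (Sx * W))) ∧
      (Wᵀ * Φ * Wᵀ = Wᵀ →
        μ ∈ LinearMap.range (Matrix.toLin' (Sx * W)) → μ = (Φ * Wᵀ).mulVec μ) := by
  have h12 : Sx * W * Φᵀ = Φ * Wᵀ * Sx := h1.trans h2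
  constructor
  · intro hfix
    obtain ⟨z, hz⟩ := hμ
    rw [Matrix.toLin'_apply] at hz
    refine ⟨Φᵀ.mulVec z, ?_⟩
    rw [Matrix.toLin'_apply]
    calc (Sx * W).mulVec (Φᵀ.mulVec z) = (Sx * W * Φᵀ).mulVec z := by
          simp [Matrix.mulVec_mulVec, Matrix.mul_assoc]
      _ = (Φ * Wᵀ).mulVec (Sx.mulVec z) := by
          rw [h12]; simp [Matrix.mulVec_mulVec, Matrix.mul_assoc]
      _ = μ := by rw [hz, ← hfix]
  · intro h3 ⟨y, hy⟩
    rw [Matrix.toLin'_apply] at hy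
    have hW : W * Φᵀ * W = W := by
      have := congrArg Matrix.transpose h3
      simpa [Matrix.transpose_mul, Matrix.mul_assoc] using this
    have key : Φ * Wᵀ * (Sx * W) = Sx * W := by
      calc Φ * Wᵀ * (Sx * W) = Sx * W * Φᵀ * W := by
            rw [← Matrix.mul_assoc, h12]
        _ = Sx * (W * Φᵀ * W) := by simp [Matrix.mul_assoc]
        _ = Sx * W := by rw [hW]
    calc μ = (Sx * W).mulVec y := hy.symm
      _ = (Φ * Wᵀ * (Sx * W)).mulVec y := by rw [key]
      _ = (Φ * Wᵀ).mulVec μ := by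
          rw [← Matrix.mulVec_mulVec, hy]
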